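/- Let ε ∈ {1, −1}. For each integer n define on the open set Ω = {(t,x) ∈ ℝ² : e^x + ε ≠ 0} the vector field L_n = e^{-nt+(n−1)x} (e^{x} + ε n)(e^{x} + ε)^{−n} ∂_t + n e^{-nt+(n−1)x} (e^{x} + ε)^{1−n} ∂_x, where the exponents −n and 1−n are integer powers. Then for all integers m, n one has [L_m, L_n] = (m − n) L_{m+n} at every point of Ω. (Realization 𝔚₅ of the Witt algebra from Theorem 1.) -/

import Mathlib

noncomputable section

/-- Partial derivative of `f : ℝ² → ℝ` (curried) in the first variable `t`. -/
def qt (f : ℝ → ℝ → ℝ) (t x : ℝ) : ℝ := deriv (fun s => f s x) t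

/-- Partial derivative in the second variable `x`. -/
def qx (f : ℝ → ℝ → ℝ) (t x : ℝ) : ℝ := deriv (fun s => f t s) x

/-- A vector field `τ ∂_t + ξ ∂_x` on ℝ² with coordinates `(t,x)`. -/
structure VF2 where
  tau : ℝ → ℝ → ℝ
  xi  : ℝ → ℝ → ℝ

/-- Action of a vector field on a function: `X(F) = τ F_t + ξ F_x`. -/
def VF2.app (X : VF2) (F : ℝ → ℝ → ℝ) (t x : ℝ) : ℝ :=
  X.tau t x * qt F t x + X.xi t x * qx F t x

/-- Lie bracket of vector fields on ℝ². -/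
def VF2.bracket (X Y : VF2) : VF2 where
  tau := fun t x => X.app Y.tau t x - Y.app X.tau t x
  xi  := fun t x => X.app Y.xi t x - Y.app X.xi t x

/-- Scalar multiple of a vector field. -/
def VF2.smul (c : ℝ) (X : VF2) : VF2 where
  tau := fun t x => c * X.tau t x
  xi  := fun t x => c * X.xi t x

/-- The vector fields of the realization 𝔚₅ (defined on `Ω = {e^x + ε ≠ 0}`):
`L n = e^{-nt+(n-1)x}(e^x + εn)(e^x + ε)^{-n} ∂_t + n e^{-nt+(n-1)x}(e^x + ε)^{1-n} ∂_x`. -/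
def W5 (ε : ℝ) (n : ℤ) : VF2 where
  tau := fun t x => Real.exp (-(n : ℝ) * t + ((n : ℝ) - 1) * x) *
    (Real.exp x + ε * (n : ℝ)) * (Real.exp x + ε) ^ (-n : ℤ)
  xi  := fun t x => (n : ℝ) * Real.exp (-(n : ℝ) * t + ((n : ℝ) - 1) * x) *
    (Real.exp x + ε) ^ (1 - n : ℤ)

/-- derivative of `s ↦ exp (c*s + d)` -/
lemma hasDerivAt_expLin (c d t : ℝ) :
    HasDerivAt (fun s : ℝ => Real.exp (c * s + d)) (Real.exp (c * t + d) * c) t := by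
  simpa [Function.comp_def] using (Real.hasDerivAt_exp (c * t + d)).comp t
    (((hasDerivAt_id t).const_mul c).add_const d)

/-- derivative of `y ↦ exp (d + c*y)` -/
lemma hasDerivAt_expLin' (c d x : ℝ) :
    HasDerivAt (fun y : ℝ => Real.exp (d + c * y)) (Real.exp (d + c * x) * c) x := by
  simpa [Function.comp_def] using (Real.hasDerivAt_exp (d + c * x)).comp x
    (((hasDerivAt_id x).const_mul c).const_add d)

/-- Realization 𝔚₅ of the Witt algebra: on `Ω = {(t,x) : e^x + ε ≠ 0}` one has
`[L m, L n] = (m - n) L (m + n)`. -/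
theorem witt_realization_W5 (ε : ℝ) (hε : ε = 1 ∨ ε = -1) (m n : ℤ)
    (t x : ℝ) (hx : Real.exp x + ε ≠ 0) :
    (VF2.bracket (W5 ε m) (W5 ε n)).tau t x
      = ((m : ℝ) - (n : ℝ)) * (W5 ε (m + n)).tau t x ∧
    (VF2.bracket (W5 ε m) (W5 ε n)).xi t x
      = ((m : ℝ) - (n : ℝ)) * (W5 ε (m + n)).xi t x := by
  have hu' : HasDerivAt (fun y : ℝ => Real.exp y + ε) (Real.exp x) x :=
    (Real.hasDerivAt_exp x).add_const ε
  -- t-derivatives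
  have ht_tau : ∀ k : ℤ, qt (W5 ε k).tau t x
      = Real.exp (-(k : ℝ) * t + ((k : ℝ) - 1) * x) * (-(k : ℝ)) *
        (Real.exp x + ε * (k : ℝ)) * (Real.exp x + ε) ^ (-k : ℤ) := by
    intro k
    have h := (((hasDerivAt_expLin (-(k : ℝ)) (((k : ℝ) - 1) * x) t).mul_const
      (Real.exp x + ε * (k : ℝ))).mul_const ((Real.exp x + ε) ^ (-k : ℤ)))
    have := h.deriv
    simp only [qt, W5]
    rw [this]
  have ht_xi : ∀ k : ℤ, qt (W5 ε k).xi t x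
      = (k : ℝ) * (Real.exp (-(k : ℝ) * t + ((k : ℝ) - 1) * x) * (-(k : ℝ))) *
        (Real.exp x + ε) ^ (1 - k : ℤ) := by
    intro k
    have h := (((hasDerivAt_expLin (-(k : ℝ)) (((k : ℝ) - 1) * x) t).const_mul
      (k : ℝ)).mul_const ((Real.exp x + ε) ^ (1 - k : ℤ)))
    have := h.deriv
    simp only [qt, W5]
    rw [this]
  -- x-derivatives
  have hzpow : ∀ k : ℤ, HasDerivAt (fun y : ℝ => (Real.exp y + ε) ^ k)
      ((k : ℝ) * (Real.exp x + ε) ^ (k - 1) * Real.exp x) x := by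
    intro k
    have h := (hasDerivAt_zpow k (Real.exp x + ε) (Or.inl hx)).comp x hu'
    simpa [Function.comp_def, mul_assoc] using h
  have hx_tau : ∀ k : ℤ, qx (W5 ε k).tau t x
      = (Real.exp (-(k : ℝ) * t + ((k : ℝ) - 1) * x) * ((k : ℝ) - 1) *
          (Real.exp x + ε * (k : ℝ)) +
         Real.exp (-(k : ℝ) * t + ((k : ℝ) - 1) * x) * Real.exp x) *
          (Real.exp x + ε) ^ (-k : ℤ) +
        Real.exp (-(k : ℝ) * t + ((k : ℝ) - 1) * x) * (Real.exp x + ε * (k : ℝ)) *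
          ((-(k : ℝ)) * (Real.exp x + ε) ^ (-k - 1 : ℤ) * Real.exp x) := by
    intro k
    have hA : HasDerivAt (fun y : ℝ => Real.exp (-(k : ℝ) * t + ((k : ℝ) - 1) * y))
        (Real.exp (-(k : ℝ) * t + ((k : ℝ) - 1) * x) * ((k : ℝ) - 1)) x :=
      hasDerivAt_expLin' ((k : ℝ) - 1) (-(k : ℝ) * t) x
    have hB : HasDerivAt (fun y : ℝ => Real.exp y + ε * (k : ℝ)) (Real.exp x) x :=
      (Real.hasDerivAt_exp x).add_const _
    have h := (hA.mul hB).mul (hzpow (-k))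
    have := h.deriv
    simp only [qt, qx, W5]
    simp only [Pi.mul_def] at this
    rw [this]; push_cast; ring
  have hx_xi : ∀ k : ℤ, qx (W5 ε k).xi t x
      = (k : ℝ) * (Real.exp (-(k : ℝ) * t + ((k : ℝ) - 1) * x) * ((k : ℝ) - 1)) *
          (Real.exp x + ε) ^ (1 - k : ℤ) +
        (k : ℝ) * Real.exp (-(k : ℝ) * t + ((k : ℝ) - 1) * x) *
          ((1 - (k : ℝ)) * (Real.exp x + ε) ^ (1 - k - 1 : ℤ) * Real.exp x) := by
    intro k
    have hA : HasDerivAt (fun y : ℝ => Real.exp (-(k : ℝ) * t + ((k : ℝ) - 1) * y))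
        (Real.exp (-(k : ℝ) * t + ((k : ℝ) - 1) * x) * ((k : ℝ) - 1)) x :=
      hasDerivAt_expLin' ((k : ℝ) - 1) (-(k : ℝ) * t) x
    have h := (hA.const_mul (k : ℝ)).mul (hzpow (1 - k))
    have := h.deriv
    simp only [qt, qx, W5]
    simp only [Pi.mul_def] at this
    rw [this]; push_cast; ring
  -- algebraic identities for zpow
  have e1 : ∀ k : ℤ, (Real.exp x + ε) ^ (1 - k : ℤ)
      = (Real.exp x + ε) * (Real.exp x + ε) ^ (-k : ℤ) := by
    intro k
    rw [show (1 - k : ℤ) = 1 + -k by ring, zpow_add₀ hx, zpow_one]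
  have e3 : ∀ k : ℤ, (Real.exp x + ε) ^ (-k - 1 : ℤ)
      = (Real.exp x + ε) ^ (-k : ℤ) * (Real.exp x + ε)⁻¹ := by
    intro k
    rw [show (-k - 1 : ℤ) = -k + -1 by ring, zpow_add₀ hx, zpow_neg_one]
  have e5 : ∀ k : ℤ, (Real.exp x + ε) ^ (1 - k - 1 : ℤ) = (Real.exp x + ε) ^ (-k : ℤ) := by
    intro k
    rw [show (1 - k - 1 : ℤ) = -k by ring]
  have e7 : (Real.exp x + ε) ^ (-(m + n) : ℤ)
      = (Real.exp x + ε) ^ (-m : ℤ) * (Real.exp x + ε) ^ (-n : ℤ) := by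
    rw [show (-(m + n) : ℤ) = -m + -n by ring, zpow_add₀ hx]
  -- exponential identity
  have eA : Real.exp (-((m + n : ℤ) : ℝ) * t + (((m + n : ℤ) : ℝ) - 1) * x)
      = Real.exp (-(m : ℝ) * t + ((m : ℝ) - 1) * x) *
        Real.exp (-(n : ℝ) * t + ((n : ℝ) - 1) * x) * Real.exp x := by
    rw [← Real.exp_add, ← Real.exp_add]
    congr 1
    push_cast
    ring
  constructor <;>
  · simp only [VF2.bracket, VF2.app, ht_tau, ht_xi, hx_tau, hx_xi]
    simp only [W5, eA, e1, e3, e5, e7]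
    push_cast
    rcases hε with rfl | rfl <;> field_simp <;> ring
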